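/- Let d_4(n) = p_4(n) - p_4(n-1), where p_4(n) counts partitions of n into parts from {2,3,4}. Then d_4(n) ≥ 0 when n is even; d_4(n) = -floor((n+11)/12) when n is odd and n is not congruent to 3 mod 12; and d_4(n) = -floor(n/12) when n ≡ 3 (mod 12). -/

import Mathlib

/-- `pCount k n` is the number of partitions of `n` all of whose parts lie in `{2, …, k}`. -/
noncomputable def pCount (k n : ℕ) : ℕ :=
  Nat.card {p : n.Partition // ∀ i ∈ p.parts, 2 ≤ i ∧ i ≤ k}

/-- `d₄(n) = p₄(n) - p₄(n-1)` as an integer. -/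
noncomputable def d4 (n : ℕ) : ℤ := (pCount 4 n : ℤ) - (pCount 4 (n - 1) : ℤ)


/-- Solutions of `2a+3b+4c = n`. -/
def T (n : ℕ) : Finset (ℕ × ℕ × ℕ) :=
  ((Finset.range (n+1)) ×ˢ (Finset.range (n+1)) ×ˢ (Finset.range (n+1))).filter
    (fun x => 2*x.1 + 3*x.2.1 + 4*x.2.2 = n)

lemma mem_T {n : ℕ} {x : ℕ × ℕ × ℕ} : x ∈ T n ↔ 2*x.1 + 3*x.2.1 + 4*x.2.2 = n := by
  simp only [T, Finset.mem_filter, Finset.mem_product, Finset.mem_range]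
  omega

/-- Solutions of `2a+3b = m`. -/
def Rset (m : ℕ) : Finset (ℕ × ℕ) :=
  ((Finset.range (m+1)) ×ˢ (Finset.range (m+1))).filter (fun x => 2*x.1 + 3*x.2 = m)

def R (m : ℕ) : ℕ := (Rset m).card

lemma mem_Rset {m : ℕ} {x : ℕ × ℕ} : x ∈ Rset m ↔ 2*x.1 + 3*x.2 = m := by
  simp only [Rset, Finset.mem_filter, Finset.mem_product, Finset.mem_range]
  omega

lemma repl_sum (a b c : ℕ) :
    (Multiset.replicate a 2 + Multiset.replicate b 3 + Multiset.replicate c 4).sum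
      = 2*a + 3*b + 4*c := by
  simp [Multiset.sum_replicate, smul_eq_mul]; ring

lemma parts_decomp {n : ℕ} (p : n.Partition) (h : ∀ i ∈ p.parts, 2 ≤ i ∧ i ≤ 4) :
    p.parts = Multiset.replicate (p.parts.count 2) 2 + Multiset.replicate (p.parts.count 3) 3 +
      Multiset.replicate (p.parts.count 4) 4 := by
  ext a
  simp only [Multiset.count_add, Multiset.count_replicate]
  rcases eq_or_ne a 2 with rfl | h2
  · simp
  rcases eq_or_ne a 3 with rfl | h3
  · simp
  rcases eq_or_ne a 4 with rfl | h4
  · simp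
  rw [Multiset.count_eq_zero_of_notMem (fun hm => by have := h a hm; omega), if_neg (Ne.symm h2),
    if_neg (Ne.symm h3), if_neg (Ne.symm h4)]

lemma pCount_eq (n : ℕ) : pCount 4 n = (T n).card := by
  rw [pCount, ← Nat.card_eq_finsetCard]
  apply Nat.card_congr
  refine
    { toFun := fun p => ⟨(p.1.parts.count 2, p.1.parts.count 3, p.1.parts.count 4), ?_⟩
      invFun := fun x =>
        ⟨⟨Multiset.replicate x.1.1 2 + Multiset.replicate x.1.2.1 3 +
            Multiset.replicate x.1.2.2 4, ?_, ?_⟩, ?_⟩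
      left_inv := ?_
      right_inv := ?_ }
  · rw [mem_T]
    have hs := p.1.parts_sum
    rw [parts_decomp p.1 p.2, repl_sum] at hs
    exact hs
  · intro i hi
    simp only [Multiset.mem_add, Multiset.mem_replicate] at hi
    omega
  · rw [repl_sum]
    exact mem_T.mp x.2
  · intro i hi
    simp only [Multiset.mem_add, Multiset.mem_replicate] at hi
    omega
  · intro p
    exact Subtype.ext (Nat.Partition.ext (parts_decomp p.1 p.2).symm)
  · intro x
    apply Subtype.ext
    obtain ⟨⟨a, b, c⟩, hx⟩ := x
    simp [Multiset.count_replicate]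

lemma R_rec (m : ℕ) : R (m+6) = R m + 1 := by
  have hsplit := Finset.card_filter_add_card_filter_not
    (s := Rset (m+6)) (p := fun x => 2 ≤ x.2)
  have h1 : ((Rset (m+6)).filter (fun x => 2 ≤ x.2)).card = R m := by
    apply Finset.card_nbij' (fun x => (x.1, x.2 - 2)) (fun y => (y.1, y.2 + 2))
    · intro a ha
      simp only [Finset.mem_coe, Finset.mem_filter, mem_Rset] at *
      omega
    · intro a ha
      simp only [Finset.mem_coe, Finset.mem_filter, mem_Rset] at *
      omega
    · intro a ha
      obtain ⟨a1, a2⟩ := a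
      simp only [Finset.mem_coe, Finset.mem_filter, mem_Rset] at ha
      simp only [Prod.mk.injEq, true_and, and_true]
      omega
    · intro a _
      rfl
  have h2 : ((Rset (m+6)).filter (fun x => ¬ 2 ≤ x.2)).card = 1 := by
    rw [Finset.card_eq_one]
    rcases Nat.even_or_odd m with he | ho
    · refine ⟨((m+6)/2, 0), ?_⟩
      rw [Nat.even_iff] at he
      ext x
      simp only [Finset.mem_filter, mem_Rset, Finset.mem_singleton, Prod.ext_iff]
      omega
    · refine ⟨((m+3)/2, 1), ?_⟩
      rw [Nat.odd_iff] at ho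
      ext x
      simp only [Finset.mem_filter, mem_Rset, Finset.mem_singleton, Prod.ext_iff]
      omega
  rw [h1, h2] at hsplit
  rw [R, ← hsplit]

lemma R_eq (m : ℕ) : R m = if m % 2 = 0 then m/6 + 1 else (m+3)/6 := by
  induction m using Nat.strong_induction_on with
  | _ m ih =>
    rcases lt_or_ge m 6 with h | h
    · interval_cases m <;> decide
    · obtain ⟨k, rfl⟩ : ∃ k, m = k + 6 := ⟨m - 6, by omega⟩
      rw [R_rec, ih k (by omega)]
      split_ifs <;> omega

lemma fiber_lt (n k : ℕ) (hk : k < 3) :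
    ((T (n+12)).filter (fun x => min x.2.2 3 = k)).card = R (n + 12 - 4*k) := by
  apply Finset.card_nbij' (fun x => (x.1, x.2.1)) (fun y => (y.1, y.2, k))
  · intro a ha
    simp only [Finset.mem_coe, Finset.mem_filter, mem_T, mem_Rset] at *
    omega
  · intro a ha
    simp only [Finset.mem_coe, Finset.mem_filter, mem_T, mem_Rset] at *
    omega
  · intro a ha
    obtain ⟨a1, a2, a3⟩ := a
    simp only [Finset.mem_coe, Finset.mem_filter, mem_T] at ha
    simp only [Prod.mk.injEq, true_and, and_true]
    omega
  · intro a _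
    rfl

lemma fiber_ge (n : ℕ) :
    ((T (n+12)).filter (fun x => min x.2.2 3 = 3)).card = (T n).card := by
  apply Finset.card_nbij' (fun x => (x.1, x.2.1, x.2.2 - 3)) (fun y => (y.1, y.2.1, y.2.2 + 3))
  · intro a ha
    simp only [Finset.mem_coe, Finset.mem_filter, mem_T] at *
    omega
  · intro a ha
    simp only [Finset.mem_coe, Finset.mem_filter, mem_T] at *
    omega
  · intro a ha
    obtain ⟨a1, a2, a3⟩ := a
    simp only [Finset.mem_coe, Finset.mem_filter, mem_T] at ha
    simp only [Prod.mk.injEq, true_and, and_true]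
    omega
  · intro a ha
    obtain ⟨a1, a2, a3⟩ := a
    simp only [Finset.mem_coe, mem_T] at ha
    simp only [Prod.mk.injEq, true_and, and_true]
    omega

lemma T_rec (n : ℕ) :
    (T (n+12)).card = (T n).card + (R (n+4) + R (n+8) + R (n+12)) := by
  have hf : ∀ x ∈ T (n+12), min x.2.2 3 ∈ Finset.range 4 := by
    intro x _
    simp only [Finset.mem_range]
    omega
  rw [Finset.card_eq_sum_card_fiberwise hf]
  rw [Finset.sum_range_succ, Finset.sum_range_succ, Finset.sum_range_succ,
    Finset.sum_range_succ, Finset.sum_range_zero]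
  rw [fiber_lt n 0 (by omega), fiber_lt n 1 (by omega), fiber_lt n 2 (by omega), fiber_ge n,
    show n + 12 - 4*0 = n + 12 by omega, show n + 12 - 4*1 = n + 8 by omega,
    show n + 12 - 4*2 = n + 4 by omega]
  ring

lemma d4_step (a : ℕ) :
    d4 (a+13) = d4 (a+1) + ((R (a+5) + R (a+9) + R (a+13) : ℕ) : ℤ)
      - ((R (a+4) + R (a+8) + R (a+12) : ℕ) : ℤ) := by
  simp only [d4, pCount_eq]
  rw [show a+13-1 = a+12 from by omega, show a+1-1 = a from by omega,
    show a+13 = a+1+12 from by ring]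
  rw [T_rec (a+1), T_rec a]
  rw [show a+1+4 = a+5 from by ring, show a+1+8 = a+9 from by ring,
    show a+1+12 = a+13 from by ring]
  push_cast
  ring

lemma S_le (a : ℕ) (ha : a % 2 = 1) :
    R (a+4) + R (a+8) + R (a+12) ≤ R (a+5) + R (a+9) + R (a+13) := by
  simp only [R_eq]
  split_ifs <;> omega

lemma S_odd (a : ℕ) (ha : a % 2 = 0) :
    R (a+5) + R (a+9) + R (a+13) + 1 = R (a+4) + R (a+8) + R (a+12) := by
  simp only [R_eq]
  split_ifs <;> omega

set_option maxRecDepth 40000 in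
/-- `d₄(n) ≥ 0` for even `n`; `d₄(n) = -⌊(n+11)/12⌋` for odd `n` with `n ≢ 3 (mod 12)`;
and `d₄(n) = -⌊n/12⌋` when `n ≡ 3 (mod 12)`. -/
theorem d4_formula (n : ℕ) :
    (Even n → 0 ≤ d4 n) ∧
    (Odd n → n % 12 ≠ 3 → d4 n = -(((n + 11) / 12 : ℕ) : ℤ)) ∧
    (n % 12 = 3 → d4 n = -((n / 12 : ℕ) : ℤ)) := by
  induction n using Nat.strong_induction_on with
  | _ n ih =>
    rcases lt_or_ge n 13 with h | h
    · have hd : ∀ k, d4 k = ((T k).card : ℤ) - ((T (k-1)).card : ℤ) := fun k => by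
        simp only [d4, pCount_eq]
      interval_cases n <;> simp only [hd, Nat.even_iff, Nat.odd_iff] <;> decide
    · obtain ⟨a, rfl⟩ : ∃ a, n = a + 13 := ⟨n - 13, by omega⟩
      have key := d4_step a
      obtain ⟨h1, h2, h3⟩ := ih (a + 1) (by omega)
      refine ⟨fun he => ?_, fun ho hm => ?_, fun hm => ?_⟩
      · rw [Nat.even_iff] at he
        have he1 := h1 (by rw [Nat.even_iff]; omega)
        have hle := S_le a (by omega)
        omega
      · rw [Nat.odd_iff] at ho
        have := h2 (by rw [Nat.odd_iff]; omega) (by omega)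
        have hs := S_odd a (by omega)
        omega
      · have := h3 (by omega)
        have hs := S_odd a (by omega)
        omega
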